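/- Let B be a (unital, possibly noncommutative) ring, let r₀, …, rₙ be positive natural numbers with n ≥ 1, set N = r₀ + ⋯ + rₙ, and fix 1 ≤ j ≤ n. A matrix x ∈ Mat_N(B) is block upper triangular for the partition (r₀, r₁, …, rₙ) if and only if x is block upper triangular for the coarser partition (r₀, r₁+⋯+r_j, r_{j+1}, …, rₙ) and the top-left corner of x of size (r₀+⋯+r_j) × (r₀+⋯+r_j) is block upper triangular for the partition (r₀, …, r_j). Equivalently, the commutative square of ring homomorphisms formed by the inclusion T(r₀,…,rₙ)(B) ⊆ T(r₀, r₁+⋯+r_j, r_{j+1},…,rₙ)(B), the top-left-corner projections to T(r₀,…,r_j)(B) and T(r₀, r₁+⋯+r_j)(B), and the inclusion T(r₀,…,r_j)(B) ⊆ T(r₀, r₁+⋯+r_j)(B), is a pullback square of rings. -/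

import Mathlib

/-- `prefSum r i = r 0 + r 1 + ⋯ + r (i-1)`. -/
def prefSum (r : ℕ → ℕ) (i : ℕ) : ℕ := ∑ k ∈ Finset.range i, r k

/-- The block containing the index `a`, for the partition with `m + 1` blocks of sizes
`r 0, …, r m`: the number of `i ≤ m` with `r 0 + ⋯ + r i ≤ a`.  (For positive sizes,
indices `0, …, r 0 − 1` are in block `0`, the next `r 1` indices in block `1`, etc.) -/
def blk (m : ℕ) (r : ℕ → ℕ) (a : ℕ) : ℕ :=
  ((Finset.range (m + 1)).filter (fun i => prefSum r (i + 1) ≤ a)).card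

/-- `x` is block upper triangular for the partition with `m + 1` blocks of sizes
`r 0, …, r m`: the entry `x a b` vanishes whenever the block of `a` is strictly below
the block of `b`. -/
def IsBlockUpperTriangular {B : Type*} [Ring B] {N : ℕ} (m : ℕ) (r : ℕ → ℕ)
    (x : Matrix (Fin N) (Fin N) B) : Prop :=
  ∀ a b : Fin N, blk m r (b : ℕ) < blk m r (a : ℕ) → x a b = 0

/-- The sizes of the coarser partition `(r 0, r 1 + ⋯ + r j, r (j+1), …, r n)`
obtained by merging blocks `1, …, j`. -/
def mergedSizes (r : ℕ → ℕ) (j : ℕ) : ℕ → ℕ := fun i =>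
  if i = 0 then r 0
  else if i = 1 then ∑ k ∈ Finset.Icc 1 j, r k
  else r (i + j - 1)

/-- For block sizes `r 0, …, r n > 0` with `N = r 0 + ⋯ + r n`, `n ≥ 1` and
`1 ≤ j ≤ n`, a matrix `x ∈ Mat_N(B)` is block upper triangular for `(r 0, …, r n)` iff it
is block upper triangular for the coarser partition `(r 0, r 1 + ⋯ + r j, r (j+1), …, r n)`
and its top-left `(r 0 + ⋯ + r j) × (r 0 + ⋯ + r j)` corner is block upper triangular for
`(r 0, …, r j)`.  (Equivalently, the square of block-triangular algebras
`T(r₀,…,rₙ) → T(r₀, r₁+⋯+r_j, r_{j+1},…,rₙ)`, `T(r₀,…,r_j) → T(r₀, r₁+⋯+r_j)`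
is a pullback square of rings.) -/
lemma prefSum_mono (r : ℕ → ℕ) : Monotone (prefSum r) := fun _ _ h =>
  Finset.sum_le_sum_of_subset (Finset.range_subset_range.mpr h)

lemma lt_blk_iff (m : ℕ) (r : ℕ → ℕ) (a i : ℕ) :
    i < blk m r a ↔ i ≤ m ∧ prefSum r (i + 1) ≤ a := by
  constructor
  · intro h
    have hc : blk m r a ≤ m + 1 := by
      refine le_trans (Finset.card_filter_le _ _) (by simp)
    constructor
    · omega
    · by_contra h2
      have hsub : (Finset.range (m + 1)).filter (fun i' => prefSum r (i' + 1) ≤ a)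
          ⊆ Finset.range i := by
        intro k hk
        simp only [Finset.mem_filter, Finset.mem_range] at hk ⊢
        by_contra hk2
        exact h2 (le_trans (prefSum_mono r (by omega : i + 1 ≤ k + 1)) hk.2)
      have := Finset.card_le_card hsub
      simp only [Finset.card_range] at this
      unfold blk at h
      omega
  · rintro ⟨h1, h2⟩
    have hsub : Finset.range (i + 1) ⊆
        (Finset.range (m + 1)).filter (fun i' => prefSum r (i' + 1) ≤ a) := by
      intro k hk
      simp only [Finset.mem_range] at hk
      simp only [Finset.mem_filter, Finset.mem_range]
      exact ⟨by omega, le_trans (prefSum_mono r (by omega : k + 1 ≤ i + 1)) h2⟩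
    have := Finset.card_le_card hsub
    simp only [Finset.card_range] at this
    unfold blk
    omega

lemma prefSum_merged_one (r : ℕ → ℕ) (j : ℕ) :
    prefSum (mergedSizes r j) 1 = prefSum r 1 := by
  simp [prefSum, mergedSizes]

lemma prefSum_merged (r : ℕ → ℕ) (j : ℕ) (hj : 1 ≤ j) :
    ∀ i, 1 ≤ i → prefSum (mergedSizes r j) (i + 1) = prefSum r (i + j) := by
  intro i hi
  induction i with
  | zero => omega
  | succ k ih =>
    rcases Nat.eq_or_lt_of_le hi with h | h
    · -- k + 1 = 1, i.e. k = 0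
      have hk : k = 0 := by omega
      subst hk
      show prefSum (mergedSizes r j) 2 = prefSum r (1 + j)
      have h1 : prefSum (mergedSizes r j) 2 = r 0 + ∑ m ∈ Finset.Icc 1 j, r m := by
        simp [prefSum, Finset.sum_range_succ, mergedSizes]
      have h2 : prefSum r (1 + j) = r 0 + ∑ m ∈ Finset.Icc 1 j, r m := by
        unfold prefSum
        rw [Finset.range_eq_Ico,
          ← Finset.sum_Ico_consecutive r (Nat.zero_le 1) (by omega : 1 ≤ 1 + j),
          show 1 + j = j + 1 by omega, Finset.Ico_add_one_right_eq_Icc]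
        rw [show (Finset.Icc 1 j) = Finset.Ico 1 (j + 1) from (Finset.Ico_add_one_right_eq_Icc 1 j).symm,
          Finset.sum_Ico_eq_sum_range]
        simp
      rw [h1, h2]
    · have hk : 1 ≤ k := by omega
      have := ih hk
      unfold prefSum at *
      rw [Finset.sum_range_succ (mergedSizes r j) (k + 1), this]
      have hms : mergedSizes r j (k + 1) = r (k + j) := by
        simp only [mergedSizes]
        rw [if_neg (by omega), if_neg (by omega)]
        congr 1
        omega
      rw [hms, show k + 1 + j = (k + j) + 1 by omega, Finset.sum_range_succ]

lemma blk_merged_lt_iff (n j : ℕ) (r : ℕ → ℕ) (hj1 : 1 ≤ j) (hjn : j ≤ n) (a b : ℕ) :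
    blk (n - j + 1) (mergedSizes r j) b < blk (n - j + 1) (mergedSizes r j) a ↔
      blk n r b < blk n r a ∧ (blk n r b = 0 ∨ j < blk n r a) := by
  have key : ∀ i c, 1 ≤ i →
      (i < blk (n - j + 1) (mergedSizes r j) c ↔ i + j - 1 < blk n r c) := by
    intro i c hi
    rw [lt_blk_iff, lt_blk_iff, prefSum_merged r j hj1 i hi,
      show i + j - 1 + 1 = i + j by omega]
    omega
  have key0 : ∀ c, (0 < blk (n - j + 1) (mergedSizes r j) c ↔ 0 < blk n r c) := by
    intro c
    rw [lt_blk_iff, lt_blk_iff, show (0 : ℕ) + 1 = 1 by rfl, prefSum_merged_one]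
    omega
  constructor
  · intro h
    rcases Nat.eq_zero_or_pos (blk (n - j + 1) (mergedSizes r j) b) with hb | hb
    · have hfb : blk n r b = 0 := by
        by_contra hfb
        have := (key0 b).mpr (by omega)
        omega
      have hfa : 0 < blk n r a := (key0 a).mp (by omega)
      exact ⟨by omega, Or.inl hfb⟩
    · have h1 : blk (n - j + 1) (mergedSizes r j) b + j - 1 < blk n r a :=
        (key _ a hb).mp h
      have h2 : ¬ (blk (n - j + 1) (mergedSizes r j) b + j - 1 < blk n r b) := fun hx => by
        have := (key _ b hb).mpr hx
        omega
      exact ⟨by omega, Or.inr (by omega)⟩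
  · rintro ⟨hlt, h0 | hja⟩
    · have hb0 : blk (n - j + 1) (mergedSizes r j) b = 0 := by
        by_contra hb
        have := (key0 b).mp (by omega)
        omega
      have := (key0 a).mpr (by omega)
      omega
    · have hga : blk n r a - j < blk (n - j + 1) (mergedSizes r j) a :=
        (key (blk n r a - j) a (by omega)).mpr (by omega)
      rcases Nat.lt_or_ge j (blk n r b) with hbj | hbj
      · have hub := key (blk n r b - j + 1) b (by omega)
        omega
      · have hub := key 1 b (le_refl 1)
        omega

lemma blk_corner (n j : ℕ) (r : ℕ → ℕ) (hjn : j ≤ n) (a : ℕ)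
    (ha : a < prefSum r (j + 1)) : blk j r a = blk n r a := by
  rcases Nat.lt_trichotomy (blk j r a) (blk n r a) with h | h | h
  · exfalso
    have h2 := (lt_blk_iff n r a (blk j r a)).mp h
    have hij : blk j r a ≤ j := by
      by_contra hc
      exact absurd (le_trans (prefSum_mono r (by omega : j + 1 ≤ blk j r a + 1)) h2.2)
        (by omega)
    exact lt_irrefl _ ((lt_blk_iff j r a _).mpr ⟨hij, h2.2⟩)
  · exact h
  · exfalso
    have h1 := (lt_blk_iff j r a (blk n r a)).mp h
    exact lt_irrefl _ ((lt_blk_iff n r a _).mpr ⟨by omega, h1.2⟩)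

theorem blockTriangular_pullback {B : Type*} [Ring B] (n j N : ℕ) (r : ℕ → ℕ)
    (hn : 1 ≤ n) (hr : ∀ k ≤ n, 0 < r k) (hj1 : 1 ≤ j) (hjn : j ≤ n)
    (hN : N = prefSum r (n + 1)) (x : Matrix (Fin N) (Fin N) B) :
    IsBlockUpperTriangular n r x ↔
      IsBlockUpperTriangular (n - j + 1) (mergedSizes r j) x ∧
      IsBlockUpperTriangular j r (x.submatrix
        (Fin.castLE (show prefSum r (j + 1) ≤ N by
          subst hN
          exact Finset.sum_le_sum_of_subset (Finset.range_subset_range.mpr (by omega))))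
        (Fin.castLE (show prefSum r (j + 1) ≤ N by
          subst hN
          exact Finset.sum_le_sum_of_subset (Finset.range_subset_range.mpr (by omega))))) := by
  constructor
  · intro hfine
    refine ⟨?_, ?_⟩
    · intro a b h
      exact hfine a b ((blk_merged_lt_iff n j r hj1 hjn (a : ℕ) (b : ℕ)).mp h).1
    · intro a b h
      rw [blk_corner n j r hjn _ b.isLt, blk_corner n j r hjn _ a.isLt] at h
      rw [Matrix.submatrix_apply]
      apply hfine
      simpa using h
  · rintro ⟨hcoarse, hcorner⟩ a b h
    by_cases hg : blk (n - j + 1) (mergedSizes r j) (b : ℕ) <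
        blk (n - j + 1) (mergedSizes r j) (a : ℕ)
    · exact hcoarse a b hg
    · rw [blk_merged_lt_iff n j r hj1 hjn (a : ℕ) (b : ℕ)] at hg
      have hfab : blk n r (a : ℕ) ≤ j ∧ blk n r (b : ℕ) ≠ 0 := by
        constructor <;> [skip; skip] <;> omega
      have hA : (a : ℕ) < prefSum r (j + 1) := by
        by_contra hc
        have := (lt_blk_iff n r (a : ℕ) j).mpr ⟨hjn, by omega⟩
        omega
      have hB : (b : ℕ) < prefSum r (j + 1) := by
        by_contra hc
        have := (lt_blk_iff n r (b : ℕ) j).mpr ⟨hjn, by omega⟩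
        omega
      have hx := hcorner ⟨(a : ℕ), hA⟩ ⟨(b : ℕ), hB⟩
        (by rw [blk_corner n j r hjn _ hB, blk_corner n j r hjn _ hA]; exact h)
      rw [Matrix.submatrix_apply] at hx
      convert hx using 2 <;> exact Fin.ext (by simp)
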